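/- In the setting of the primal-dual iteration with fixed stepsizes τ₀, σ₀ > 0 satisfying τ₀σ₀L² ≤ 1 (v_{k+1} = prox_{σ₀ G}(v_k + σ₀(Xᵀy − XᵀX w'_k)), w_{k+1} = prox_{τ₀ F}(w_k + τ₀ XᵀX v_{k+1}), w'_{k+1} = 2 w_{k+1} − w_k, w'_0 = w_0), suppose (w*, v*) is a saddle point of φ(w, v) = ⟨Xᵀ(y − Xw), v⟩ + F(w) − G(v). Define the averaged iterates w̄_k = (1/k)Σ_{i=1}^k w_i and v̄_k = (1/k)Σ_{i=1}^k v_i. Then for any (w, v), the primal-dual gap satisfies [⟨Xᵀ(y − X w̄_k), v⟩ + F(w̄_k) − G(v)] − [⟨Xᵀ(y − Xw), v̄_k⟩ + F(w) − G(v̄_k)] ≤ (1/k)( ‖v − v₀‖²/(2σ₀) + ‖w − w₀‖²/(2τ₀) ), and in particular with C = 1/(1 − τ₀σ₀L²), the gap evaluated at (w*, v*)-centered balls is bounded by ((1+C)/k)( ‖w* − w₀‖²/(2τ₀) + ‖v* − v₀‖²/(2σ₀) ). Moreover, every limit point of the sequence (w̄_k, v̄_k) is a saddle point of φ. -/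

import Mathlib

open Matrix Finset

noncomputable section

/-- Euclidean inner product on ℝ^p. -/
def dotp {p : ℕ} (x y : Fin p → ℝ) : ℝ := ∑ i, x i * y i

/-- Squared Euclidean norm on ℝ^p. -/
def normSq {p : ℕ} (x : Fin p → ℝ) : ℝ := ∑ i, x i ^ 2

/-- ℓ2-operator norm of a real matrix. -/
def opNorm {m k : Type} [Fintype m] [Fintype k] (A : Matrix m k ℝ) : ℝ :=
  sSup {c | ∃ z : k → ℝ, (∑ i, z i ^ 2) ≤ 1 ∧ c = Real.sqrt (∑ i, (A.mulVec z) i ^ 2)}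

/-- `G` is a norm on ℝ^p. -/
def IsNorm {p : ℕ} (G : (Fin p → ℝ) → ℝ) : Prop :=
  (∀ x, G x = 0 ↔ x = 0) ∧ (∀ (a : ℝ) x, G (a • x) = |a| * G x) ∧
    (∀ x z, G (x + z) ≤ G x + G z)

/-- `F : ℝ^p → (−∞, +∞]` is proper, convex and lower semicontinuous. -/
def ProperConvexLsc {p : ℕ} (F : (Fin p → ℝ) → EReal) : Prop :=
  (∀ w, F w ≠ ⊥) ∧ (∃ w, F w ≠ ⊤) ∧
    (∀ (w₁ w₂ : Fin p → ℝ) (a b : ℝ), 0 ≤ a → 0 ≤ b → a + b = 1 →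
      F (a • w₁ + b • w₂) ≤ (a : EReal) * F w₁ + (b : EReal) * F w₂) ∧
    LowerSemicontinuous F

/-- The convex-concave saddle function φ(w,v) = ⟨Xᵀ(y − Xw), v⟩ + F(w) − G(v). -/
def phi {n p : ℕ} (X : Matrix (Fin n) (Fin p) ℝ) (y : Fin n → ℝ)
    (F : (Fin p → ℝ) → EReal) (G : (Fin p → ℝ) → ℝ)
    (w v : Fin p → ℝ) : EReal :=
  ((dotp (Xᵀ.mulVec (y - X.mulVec w)) v : ℝ) : EReal) + F w - ((G v : ℝ) : EReal)

/-- `(wstar, vstar)` is a saddle point of φ. -/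
def IsSaddle {n p : ℕ} (X : Matrix (Fin n) (Fin p) ℝ) (y : Fin n → ℝ)
    (F : (Fin p → ℝ) → EReal) (G : (Fin p → ℝ) → ℝ)
    (wstar vstar : Fin p → ℝ) : Prop :=
  ∀ w v, phi X y F G wstar v ≤ phi X y F G wstar vstar ∧
    phi X y F G wstar vstar ≤ phi X y F G w vstar


/-- Averaged iterates: `w̄_k = (1/k) ∑_{i=1}^k w_i`. -/
def avgIter {p : ℕ} (w : ℕ → Fin p → ℝ) (k : ℕ) : Fin p → ℝ :=
  (k : ℝ)⁻¹ • ∑ i ∈ Finset.Icc 1 k, w i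

/-! ### Auxiliary lemmas -/

section Aux

lemma dotp_comm {p : ℕ} (x y : Fin p → ℝ) : dotp x y = dotp y x := by
  simp [dotp, mul_comm]

lemma normSq_nonneg {p : ℕ} (x : Fin p → ℝ) : 0 ≤ normSq x :=
  Finset.sum_nonneg fun i _ => sq_nonneg _

lemma normSq_expand {p : ℕ} (x y : Fin p → ℝ) :
    normSq (x + y) = normSq x + 2 * dotp x y + normSq y := by
  simp only [normSq, dotp, Pi.add_apply, Finset.mul_sum]
  rw [← Finset.sum_add_distrib, ← Finset.sum_add_distrib]
  exact Finset.sum_congr rfl fun i _ => by ring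

lemma dotp_smul_right {p : ℕ} (c : ℝ) (x y : Fin p → ℝ) :
    dotp x (c • y) = c * dotp x y := by
  simp [dotp, Finset.mul_sum]; exact Finset.sum_congr rfl fun i _ => by ring

lemma dotp_add_right {p : ℕ} (x y z : Fin p → ℝ) :
    dotp x (y + z) = dotp x y + dotp x z := by
  simp [dotp, ← Finset.sum_add_distrib]; exact Finset.sum_congr rfl fun i _ => by ring

lemma dotp_sub_right {p : ℕ} (x y z : Fin p → ℝ) :
    dotp x (y - z) = dotp x y - dotp x z := by
  simp [dotp, ← Finset.sum_sub_distrib]; exact Finset.sum_congr rfl fun i _ => by ring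

lemma dotp_add_left {p : ℕ} (x y z : Fin p → ℝ) :
    dotp (x + y) z = dotp x z + dotp y z := by
  rw [dotp_comm, dotp_add_right, dotp_comm z x, dotp_comm z y]

lemma dotp_sub_left {p : ℕ} (x y z : Fin p → ℝ) :
    dotp (x - y) z = dotp x z - dotp y z := by
  rw [dotp_comm, dotp_sub_right, dotp_comm z x, dotp_comm z y]

lemma dotp_neg_right {p : ℕ} (x y : Fin p → ℝ) : dotp x (-y) = - dotp x y := by
  simp [dotp, mul_neg]

lemma normSq_smul {p : ℕ} (c : ℝ) (x : Fin p → ℝ) : normSq (c • x) = c^2 * normSq x := by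
  simp [normSq, Finset.mul_sum]; exact Finset.sum_congr rfl fun i _ => by ring

lemma normSq_add_smul {p : ℕ} (x d : Fin p → ℝ) (t : ℝ) :
    normSq (x + t • d) = normSq x + 2 * t * dotp x d + t^2 * normSq d := by
  rw [normSq_expand, dotp_smul_right, normSq_smul]; ring

lemma normSq_neg {p : ℕ} (x : Fin p → ℝ) : normSq (-x) = normSq x := by
  simp [normSq]

lemma normSq_sub_comm {p : ℕ} (x y : Fin p → ℝ) : normSq (x - y) = normSq (y - x) := by
  rw [← normSq_neg (x - y)]; congr 1; abel

lemma dotp_le {p : ℕ} (x y : Fin p → ℝ) :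
    dotp x y ≤ Real.sqrt (normSq x) * Real.sqrt (normSq y) := by
  have h := Finset.sum_mul_sq_le_sq_mul_sq Finset.univ x y
  have h2 : dotp x y ≤ |dotp x y| := le_abs_self _
  refine h2.trans ?_
  rw [← Real.sqrt_mul (normSq_nonneg x), ← Real.sqrt_sq_eq_abs]
  exact Real.sqrt_le_sqrt h

lemma dotp_sum_right {p : ℕ} {ι : Type*} (s : Finset ι) (x : Fin p → ℝ) (f : ι → Fin p → ℝ) :
    dotp x (∑ i ∈ s, f i) = ∑ i ∈ s, dotp x (f i) := by
  classical
  induction s using Finset.induction with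
  | empty => simp [dotp]
  | insert _ _ hnot ih =>
    rw [Finset.sum_insert hnot, Finset.sum_insert hnot, dotp_add_right, ih]

lemma opNorm_set_bdd {m k : Type} [Fintype m] [Fintype k] (A : Matrix m k ℝ) :
    BddAbove {c | ∃ z : k → ℝ, (∑ i, z i ^ 2) ≤ 1 ∧ c = Real.sqrt (∑ i, (A.mulVec z) i ^ 2)} := by
  refine ⟨Real.sqrt (∑ i, ∑ j, A i j ^ 2), ?_⟩
  rintro c ⟨z, hz, rfl⟩
  apply Real.sqrt_le_sqrt
  apply Finset.sum_le_sum
  intro i _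
  have h := Finset.sum_mul_sq_le_sq_mul_sq Finset.univ (A i) z
  calc (A.mulVec z) i ^ 2 = (∑ j, A i j * z j) ^ 2 := by simp [Matrix.mulVec, dotProduct]
    _ ≤ (∑ j, A i j ^ 2) * ∑ j, z j ^ 2 := h
    _ ≤ (∑ j, A i j ^ 2) * 1 :=
        mul_le_mul_of_nonneg_left hz (Finset.sum_nonneg fun j _ => sq_nonneg _)
    _ = ∑ j, A i j ^ 2 := mul_one _

lemma opNorm_nonneg {m k : Type} [Fintype m] [Fintype k] (A : Matrix m k ℝ) :
    0 ≤ opNorm A := by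
  apply le_csSup (opNorm_set_bdd A)
  exact ⟨0, by simp, by simp [Matrix.mulVec_zero]⟩

lemma opNorm_bound {m k : Type} [Fintype m] [Fintype k] (A : Matrix m k ℝ) (z : k → ℝ) :
    Real.sqrt (∑ i, (A.mulVec z) i ^ 2) ≤ opNorm A * Real.sqrt (∑ i, z i ^ 2) := by
  rcases eq_or_ne z 0 with rfl | hz
  · simp [Matrix.mulVec_zero]
  · set r := Real.sqrt (∑ i, z i ^ 2) with hr
    have hzsq : 0 < ∑ i, z i ^ 2 := by
      obtain ⟨i, hi⟩ : ∃ i, z i ≠ 0 := by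
        by_contra h; push_neg at h; exact hz (funext h)
      exact Finset.sum_pos' (fun j _ => sq_nonneg _) ⟨i, Finset.mem_univ i, by positivity⟩
    have hrpos : 0 < r := Real.sqrt_pos.2 hzsq
    have key : Real.sqrt (∑ i, (A.mulVec (r⁻¹ • z)) i ^ 2) ≤ opNorm A := by
      apply le_csSup (opNorm_set_bdd A)
      refine ⟨r⁻¹ • z, ?_, rfl⟩
      have : ∑ i, (r⁻¹ • z) i ^ 2 = r⁻¹^2 * ∑ i, z i ^ 2 := by
        simp [Finset.mul_sum]; exact Finset.sum_congr rfl fun i _ => by ring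
      rw [this]
      have hr2 : r ^ 2 = ∑ i, z i ^ 2 := Real.sq_sqrt hzsq.le
      rw [inv_pow, hr2, inv_mul_cancel₀ hzsq.ne']
    have hmv : A.mulVec (r⁻¹ • z) = r⁻¹ • A.mulVec z := by
      rw [Matrix.mulVec_smul]
    rw [hmv] at key
    have : ∑ i, (r⁻¹ • A.mulVec z) i ^ 2 = r⁻¹^2 * ∑ i, (A.mulVec z) i ^ 2 := by
      simp [Finset.mul_sum]; exact Finset.sum_congr rfl fun i _ => by ring
    rw [this, Real.sqrt_mul (by positivity), Real.sqrt_sq_eq_abs,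
      abs_of_pos (by positivity)] at key
    calc Real.sqrt (∑ i, (A.mulVec z) i ^ 2)
        = r * (r⁻¹ * Real.sqrt (∑ i, (A.mulVec z) i ^ 2)) := by field_simp
      _ ≤ r * opNorm A := mul_le_mul_of_nonneg_left key hrpos.le
      _ = opNorm A * r := mul_comm _ _

lemma nonneg_of_forall_t {c1 c2 : ℝ} (hc2 : 0 ≤ c2)
    (H : ∀ t : ℝ, 0 < t → t ≤ 1 → 0 ≤ t * c1 + t^2 * c2) : 0 ≤ c1 := by
  by_contra hneg
  push_neg at hneg
  set t := min 1 (-c1 / (2 * c2 + 1)) with ht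
  have hden : (0:ℝ) < 2 * c2 + 1 := by linarith
  have htpos : 0 < t := lt_min one_pos (div_pos (by linarith) hden)
  have htle : t ≤ 1 := min_le_left _ _
  have h2 : t * c2 ≤ -c1 / 2 := by
    have h3 : t ≤ -c1 / (2 * c2 + 1) := min_le_right _ _
    have : t * c2 ≤ (-c1 / (2 * c2 + 1)) * c2 := mul_le_mul_of_nonneg_right h3 hc2
    refine this.trans ?_
    rw [div_mul_eq_mul_div, div_le_div_iff₀ hden two_pos]
    nlinarith
  have := H t htpos htle
  nlinarith [mul_pos htpos (by linarith : (0:ℝ) < -c1 / 2)]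

lemma young_ineq {τ σ L x y : ℝ} (hτ : 0 < τ) (hσ : 0 < σ) (hL : 0 ≤ L)
    (hstep : τ * σ * L^2 ≤ 1) (hx : 0 ≤ x) (hy : 0 ≤ y) :
    L * x * y ≤ x^2/(2*τ) + y^2/(2*σ) := by
  have hs : Real.sqrt σ ^ 2 = σ := Real.sq_sqrt hσ.le
  have ht : Real.sqrt τ ^ 2 = τ := Real.sq_sqrt hτ.le
  have h1 : σ * τ * L ≤ Real.sqrt σ * Real.sqrt τ := by
    have key : (σ * τ * L)^2 ≤ (Real.sqrt σ * Real.sqrt τ)^2 := by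
      have hss : (Real.sqrt σ * Real.sqrt τ)^2 = σ * τ := by
        rw [mul_pow, hs, ht]
      rw [hss]
      nlinarith [mul_pos hσ hτ]
    calc σ * τ * L ≤ |σ * τ * L| := le_abs_self _
      _ = Real.sqrt ((σ * τ * L)^2) := (Real.sqrt_sq_eq_abs _).symm
      _ ≤ Real.sqrt ((Real.sqrt σ * Real.sqrt τ)^2) := Real.sqrt_le_sqrt key
      _ = |Real.sqrt σ * Real.sqrt τ| := Real.sqrt_sq_eq_abs _
      _ = Real.sqrt σ * Real.sqrt τ := abs_of_nonneg (by positivity)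
  have h2 : 2 * (Real.sqrt σ * Real.sqrt τ) * (x * y) ≤ σ * x^2 + τ * y^2 := by
    nlinarith [sq_nonneg (Real.sqrt σ * x - Real.sqrt τ * y)]
  have hxy : 0 ≤ x * y := mul_nonneg hx hy
  rw [div_add_div _ _ (by positivity) (by positivity), le_div_iff₀ (by positivity)]
  nlinarith [mul_le_mul_of_nonneg_right h1 hxy]

lemma convex_comb_eq {p : ℕ} (m u : Fin p → ℝ) (t : ℝ) :
    m + t • (u - m) = (1 - t) • m + t • u := by
  funext i; simp; ring

lemma shift_eq {p : ℕ} (m z u : Fin p → ℝ) (t : ℝ) :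
    m + t • (u - m) - z = (m - z) + t • (u - m) := by
  funext i; simp; ring

lemma prox_three_point {p : ℕ} (h : (Fin p → ℝ) → ℝ)
    (hconv : ∀ x y (a b : ℝ), 0 ≤ a → 0 ≤ b → a + b = 1 →
      h (a • x + b • y) ≤ a * h x + b * h y)
    (z m : Fin p → ℝ)
    (hmin : ∀ u, normSq (m - z) / 2 + h m ≤ normSq (u - z) / 2 + h u) :
    ∀ u, normSq (m - z) / 2 + h m + normSq (u - m) / 2 ≤ normSq (u - z) / 2 + h u := by
  intro u
  have key : 0 ≤ dotp (m - z) (u - m) + (h u - h m) := by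
    apply nonneg_of_forall_t (c2 := normSq (u - m) / 2) (by linarith [normSq_nonneg (u - m)])
    intro t ht0 ht1
    have h1 := hmin (m + t • (u - m))
    have h2 : h (m + t • (u - m)) ≤ (1 - t) * h m + t * h u := by
      rw [convex_comb_eq]
      exact hconv m u (1 - t) t (by linarith) ht0.le (by ring)
    rw [shift_eq, normSq_add_smul] at h1
    nlinarith
  have hexp : normSq (u - z) = normSq (m - z) + 2 * dotp (m - z) (u - m) + normSq (u - m) := by
    have : u - z = (m - z) + (u - m) := by funext i; simp
    rw [this, normSq_expand]
  linarith

lemma prox_three_point_ereal {p : ℕ} (F : (Fin p → ℝ) → EReal)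
    (hbot : ∀ w, F w ≠ ⊥)
    (hconv : ∀ (w₁ w₂ : Fin p → ℝ) (a b : ℝ), 0 ≤ a → 0 ≤ b → a + b = 1 →
      F (a • w₁ + b • w₂) ≤ (a : EReal) * F w₁ + (b : EReal) * F w₂)
    (τ : ℝ) (hτ : 0 < τ) (z m : Fin p → ℝ) (cm : ℝ) (hcm : F m = (cm : EReal))
    (hmin : ∀ u : Fin p → ℝ,
      ((normSq (m - z) / 2 : ℝ) : EReal) + (τ : EReal) * F m
        ≤ ((normSq (u - z) / 2 : ℝ) : EReal) + (τ : EReal) * F u) :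
    ∀ u (cu : ℝ), F u = (cu : EReal) →
      normSq (m - z) / 2 + τ * cm + normSq (u - m) / 2 ≤ normSq (u - z) / 2 + τ * cu := by
  intro u cu hcu
  have key : 0 ≤ dotp (m - z) (u - m) + (τ * cu - τ * cm) := by
    apply nonneg_of_forall_t (c2 := normSq (u - m) / 2) (by linarith [normSq_nonneg (u - m)])
    intro t ht0 ht1
    have hcq : F (m + t • (u - m)) ≤ (((1 - t) * cm + t * cu : ℝ) : EReal) := by
      rw [convex_comb_eq]
      refine (hconv m u (1 - t) t (by linarith) ht0.le (by ring)).trans ?_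
      rw [hcm, hcu, ← EReal.coe_mul, ← EReal.coe_mul, ← EReal.coe_add]
    have hnt : F (m + t • (u - m)) ≠ ⊤ := by
      intro htop; rw [htop] at hcq
      exact (EReal.coe_lt_top _).not_ge hcq
    set rt := (F (m + t • (u - m))).toReal with hrt
    have hFt : F (m + t • (u - m)) = (rt : EReal) := (EReal.coe_toReal hnt (hbot _)).symm
    have hrle : rt ≤ (1 - t) * cm + t * cu := by
      rw [hFt] at hcq; exact EReal.coe_le_coe_iff.1 hcq
    have h1 := hmin (m + t • (u - m))
    rw [hcm, hFt, ← EReal.coe_mul, ← EReal.coe_mul, ← EReal.coe_add, ← EReal.coe_add,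
      EReal.coe_le_coe_iff] at h1
    rw [shift_eq, normSq_add_smul] at h1
    nlinarith
  have hexp : normSq (u - z) = normSq (m - z) + 2 * dotp (m - z) (u - m) + normSq (u - m) := by
    have : u - z = (m - z) + (u - m) := by funext i; simp
    rw [this, normSq_expand]
  linarith

lemma sum_Icc_one {M : Type*} [AddCommMonoid M] (f : ℕ → M) (k : ℕ) :
    ∑ i ∈ Finset.Icc 1 k, f i = ∑ j ∈ Finset.range k, f (j + 1) := by
  induction k with
  | zero => simp
  | succ k ih =>
    rw [Finset.sum_range_succ, ← ih, Finset.sum_Icc_succ_top (by omega)]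

lemma avg_succ {p : ℕ} (w : ℕ → Fin p → ℝ) (k : ℕ) :
    avgIter w (k + 1) = ((k : ℝ)/(k+1)) • avgIter w k + ((1 : ℝ)/(k+1)) • w (k+1) := by
  rcases Nat.eq_zero_or_pos k with rfl | hk
  · simp [avgIter]
  · unfold avgIter
    rw [Finset.sum_Icc_succ_top (by omega), smul_smul]
    have hk0 : (k : ℝ) ≠ 0 := Nat.cast_ne_zero.2 hk.ne'
    have h1 : ((k : ℝ)/(k+1)) * (k : ℝ)⁻¹ = ((k : ℝ)+1)⁻¹ := by
      field_simp
    push_cast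
    rw [h1, one_div, smul_add]

lemma G_zero {q : ℕ} {G : (Fin q → ℝ) → ℝ} (hG : IsNorm G) : G 0 = 0 := (hG.1 0).2 rfl

lemma G_nonneg {q : ℕ} {G : (Fin q → ℝ) → ℝ} (hG : IsNorm G) (x : Fin q → ℝ) : 0 ≤ G x := by
  have h1 := hG.2.2 x (-x)
  have h2 : G (-x) = G x := by
    have := hG.2.1 (-1) x
    simpa using this
  have h3 : G (x + -x) = 0 := by rw [add_neg_cancel, G_zero hG]
  linarith

lemma G_conv {q : ℕ} {G : (Fin q → ℝ) → ℝ} (hG : IsNorm G) (x y : Fin q → ℝ) (a b : ℝ)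
    (ha : 0 ≤ a) (hb : 0 ≤ b) :
    G (a • x + b • y) ≤ a * G x + b * G y := by
  refine (hG.2.2 _ _).trans ?_
  rw [hG.2.1, hG.2.1, abs_of_nonneg ha, abs_of_nonneg hb]

lemma G_avg {q : ℕ} {G : (Fin q → ℝ) → ℝ} (hG : IsNorm G) (v : ℕ → Fin q → ℝ) :
    ∀ k : ℕ, 1 ≤ k → G (avgIter v k) ≤ (k : ℝ)⁻¹ * ∑ i ∈ Finset.Icc 1 k, G (v i) := by
  intro k hk
  induction k with
  | zero => omega
  | succ k ih =>
    rcases Nat.eq_zero_or_pos k with rfl | hk1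
    · simp [avgIter]
    · have hIH := ih hk1
      rw [avg_succ]
      have hkr : (0:ℝ) < k := by exact_mod_cast hk1
      refine (G_conv hG _ _ _ _ (by positivity) (by positivity)).trans ?_
      rw [Finset.sum_Icc_succ_top (by omega)]
      have h2 : ((k:ℝ)/(k+1)) * G (avgIter v k)
          ≤ ((k:ℝ)/(k+1)) * ((k : ℝ)⁻¹ * ∑ i ∈ Finset.Icc 1 k, G (v i)) :=
        mul_le_mul_of_nonneg_left hIH (by positivity)
      have h3 : ((k:ℝ)/(k+1)) * ((k : ℝ)⁻¹ * ∑ i ∈ Finset.Icc 1 k, G (v i))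
          = ((k:ℝ)+1)⁻¹ * ∑ i ∈ Finset.Icc 1 k, G (v i) := by field_simp
      have h4 : ((k:ℝ)+1)⁻¹ * ((∑ i ∈ Finset.Icc 1 k, G (v i)) + G (v (k+1)))
          = ((k:ℝ)+1)⁻¹ * (∑ i ∈ Finset.Icc 1 k, G (v i)) + ((k:ℝ)+1)⁻¹ * G (v (k+1)) :=
        mul_add _ _ _
      push_cast
      rw [h4, one_div]
      linarith

lemma F_avg {p : ℕ} (F : (Fin p → ℝ) → EReal) (hbot : ∀ x, F x ≠ ⊥)
    (hconv : ∀ (w₁ w₂ : Fin p → ℝ) (a b : ℝ), 0 ≤ a → 0 ≤ b → a + b = 1 →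
      F (a • w₁ + b • w₂) ≤ (a : EReal) * F w₁ + (b : EReal) * F w₂)
    (w : ℕ → Fin p → ℝ) (a : ℕ → ℝ) (ha : ∀ i, 1 ≤ i → F (w i) = ((a i : ℝ) : EReal)) :
    ∀ k : ℕ, 1 ≤ k →
      F (avgIter w k) ≤ (((k : ℝ)⁻¹ * ∑ i ∈ Finset.Icc 1 k, a i : ℝ) : EReal) := by
  intro k hk
  induction k with
  | zero => omega
  | succ k ih =>
    rcases Nat.eq_zero_or_pos k with rfl | hk1
    · have : avgIter w 1 = w 1 := by simp [avgIter]
      rw [this, ha 1 le_rfl]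
      norm_num
    · have hIH := ih hk1
      have hkr : (0:ℝ) < k := by exact_mod_cast hk1
      rw [avg_succ]
      have hcs := hconv (avgIter w k) (w (k+1)) ((k:ℝ)/(k+1)) ((1:ℝ)/(k+1))
        (by positivity) (by positivity) (by field_simp)
      have hnt : F (avgIter w k) ≠ ⊤ := by
        intro htop; rw [htop] at hIH; exact (EReal.coe_lt_top _).not_ge hIH
      set r := (F (avgIter w k)).toReal with hr
      have hFr : F (avgIter w k) = (r : EReal) := (EReal.coe_toReal hnt (hbot _)).symm
      have hrle : r ≤ (k : ℝ)⁻¹ * ∑ i ∈ Finset.Icc 1 k, a i := by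
        rw [hFr] at hIH; exact EReal.coe_le_coe_iff.1 hIH
      refine hcs.trans ?_
      rw [hFr, ha (k+1) (by omega), ← EReal.coe_mul, ← EReal.coe_mul, ← EReal.coe_add,
        EReal.coe_le_coe_iff]
      rw [Finset.sum_Icc_succ_top (by omega)]
      have h2 : ((k:ℝ)/(k+1)) * r ≤ ((k:ℝ)+1)⁻¹ * ∑ i ∈ Finset.Icc 1 k, a i := by
        have := mul_le_mul_of_nonneg_left hrle (by positivity : (0:ℝ) ≤ (k:ℝ)/(k+1))
        refine this.trans_eq ?_
        field_simp
      have h4 : ((k:ℝ)+1)⁻¹ * ((∑ i ∈ Finset.Icc 1 k, a i) + a (k+1))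
          = ((k:ℝ)+1)⁻¹ * (∑ i ∈ Finset.Icc 1 k, a i) + ((k:ℝ)+1)⁻¹ * a (k+1) :=
        mul_add _ _ _
      push_cast
      rw [h4, one_div]
      linarith

lemma G_sum_le {q : ℕ} {G : (Fin q → ℝ) → ℝ} (hG : IsNorm G) {ι : Type*}
    (s : Finset ι) (f : ι → Fin q → ℝ) :
    G (∑ i ∈ s, f i) ≤ ∑ i ∈ s, G (f i) := by
  classical
  induction s using Finset.induction with
  | empty => simp [G_zero hG]
  | insert _ _ hnotmem ih =>
    rw [Finset.sum_insert hnotmem, Finset.sum_insert hnotmem]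
    exact (hG.2.2 _ _).trans (by linarith)

lemma G_bound {q : ℕ} {G : (Fin q → ℝ) → ℝ} (hG : IsNorm G) (z : Fin q → ℝ) :
    G z ≤ ∑ i, |z i| * G (Pi.single i 1) := by
  have hz : z = ∑ i, z i • (Pi.single i (1:ℝ) : Fin q → ℝ) := by
    funext j
    simp [Finset.sum_apply, Pi.single_apply]
  calc G z = G (∑ i, z i • (Pi.single i (1:ℝ) : Fin q → ℝ)) := by rw [← hz]
    _ ≤ ∑ i, G (z i • (Pi.single i (1:ℝ) : Fin q → ℝ)) := G_sum_le hG _ _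
    _ = ∑ i, |z i| * G (Pi.single i 1) :=
        Finset.sum_congr rfl fun i _ => hG.2.1 _ _

lemma G_continuous {q : ℕ} {G : (Fin q → ℝ) → ℝ} (hG : IsNorm G) : Continuous G := by
  rw [continuous_iff_continuousAt]
  intro x
  rw [ContinuousAt, tendsto_iff_dist_tendsto_zero]
  have hb : ∀ z : Fin q → ℝ, dist (G z) (G x) ≤ ∑ i, |z i - x i| * G (Pi.single i 1) := by
    intro z
    rw [Real.dist_eq, abs_sub_le_iff]
    constructor
    · have h1 : G z ≤ G (z - x) + G x := by
        have := hG.2.2 (z - x) x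
        simpa using this
      have h2 := G_bound hG (z - x)
      simp only [Pi.sub_apply] at h2
      linarith
    · have h1 : G x ≤ G (x - z) + G z := by
        have := hG.2.2 (x - z) z
        simpa using this
      have h2 := G_bound hG (x - z)
      have h3 : ∑ i, |x i - z i| * G (Pi.single i 1) = ∑ i, |z i - x i| * G (Pi.single i 1) :=
        Finset.sum_congr rfl fun i _ => by rw [abs_sub_comm]
      simp only [Pi.sub_apply] at h2
      linarith
  have hcont : Filter.Tendsto (fun z : Fin q → ℝ => ∑ i, |z i - x i| * G (Pi.single i 1))
      (nhds x) (nhds 0) := by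
    have hc : Continuous (fun z : Fin q → ℝ => ∑ i, |z i - x i| * G (Pi.single i 1)) := by
      apply continuous_finset_sum
      intro i _
      exact (((continuous_apply i).sub continuous_const).abs).mul continuous_const
    have h0 : (fun z : Fin q → ℝ => ∑ i, |z i - x i| * G (Pi.single i 1)) x = 0 := by simp
    simpa [h0] using hc.tendsto x
  exact squeeze_zero (fun z => dist_nonneg) hb hcont

end Aux

/-- ergodic `O(1/k)` convergence of the primal-dual gap, and every
limit point of the averaged iterates is a saddle point. -/
theorem pdsp_ergodic {n p : ℕ} (X : Matrix (Fin n) (Fin p) ℝ) (y : Fin n → ℝ)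
    (F : (Fin p → ℝ) → EReal) (G : (Fin p → ℝ) → ℝ)
    (hF : ProperConvexLsc F) (hG : IsNorm G)
    (L : ℝ) (hL : L = opNorm (Xᵀ * fromCols (1 : Matrix (Fin n) (Fin n) ℝ) (-X)))
    (τ σ : ℝ) (hτ : 0 < τ) (hσ : 0 < σ) (hstep : τ * σ * L ^ 2 ≤ 1)
    (w v w' : ℕ → Fin p → ℝ)
    (hw'0 : w' 0 = w 0)
    -- v_{k+1} = prox_{σ G}(v_k + σ(Xᵀy − XᵀX w'_k))
    (hv : ∀ k, ∀ u : Fin p → ℝ,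
      normSq (v (k+1) - (v k + σ • (Xᵀ.mulVec y - (Xᵀ * X).mulVec (w' k)))) / 2
          + σ * G (v (k+1))
        ≤ normSq (u - (v k + σ • (Xᵀ.mulVec y - (Xᵀ * X).mulVec (w' k)))) / 2
          + σ * G u)
    -- w_{k+1} = prox_{τ F}(w_k + τ XᵀX v_{k+1})
    (hw : ∀ k, ∀ u : Fin p → ℝ,
      ((normSq (w (k+1) - (w k + τ • (Xᵀ * X).mulVec (v (k+1)))) / 2 : ℝ) : EReal)
          + (τ : EReal) * F (w (k+1))
        ≤ ((normSq (u - (w k + τ • (Xᵀ * X).mulVec (v (k+1)))) / 2 : ℝ) : EReal)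
          + (τ : EReal) * F u)
    -- extrapolation step
    (hw' : ∀ k, w' (k+1) = (2 : ℝ) • w (k+1) - w k)
    (wstar vstar : Fin p → ℝ)
    (hsaddle : IsSaddle X y F G wstar vstar) :
    -- (i) primal-dual gap bound at any (w, v)
    (∀ k : ℕ, 1 ≤ k → ∀ ww vv : Fin p → ℝ,
      phi X y F G (avgIter w k) vv - phi X y F G ww (avgIter v k)
        ≤ (((1 / (k : ℝ)) *
            (normSq (vv - v 0) / (2 * σ) + normSq (ww - w 0) / (2 * τ)) : ℝ) : EReal)) ∧
    -- (ii) in particular, the gap centered at the saddle point, with C = 1/(1 − τσL²)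
    (∀ k : ℕ, 1 ≤ k →
      phi X y F G (avgIter w k) vstar - phi X y F G wstar (avgIter v k)
        ≤ ((((1 + 1 / (1 - τ * σ * L ^ 2)) / (k : ℝ)) *
            (normSq (wstar - w 0) / (2 * τ) + normSq (vstar - v 0) / (2 * σ)) : ℝ) : EReal)) ∧
    -- (iii) every limit point of the averaged iterates is a saddle point
    (∀ wh vh : Fin p → ℝ,
      MapClusterPt (wh, vh) Filter.atTop (fun k => (avgIter w k, avgIter v k)) →
      IsSaddle X y F G wh vh) := by
  obtain ⟨hFbot, ⟨w0f, hw0f⟩, hFconv, hFlsc⟩ := hF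
  set KK : Matrix (Fin p) (Fin p) ℝ := Xᵀ * X with hKK
  set bb : Fin p → ℝ := Xᵀ.mulVec y with hbb
  have hL0 : 0 ≤ L := hL ▸ opNorm_nonneg _
  -- operator norm bound for KK
  have hKz : ∀ z : Fin p → ℝ,
      Real.sqrt (normSq (KK.mulVec z)) ≤ L * Real.sqrt (normSq z) := by
    intro z
    have hA : (Xᵀ * fromCols (1 : Matrix (Fin n) (Fin n) ℝ) (-X)).mulVec
        (Sum.elim (0 : Fin n → ℝ) (-z)) = KK.mulVec z := by
      rw [← Matrix.mulVec_mulVec, Matrix.fromCols_mulVec_sumElim, Matrix.one_mulVec,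
        Matrix.neg_mulVec, Matrix.mulVec_neg, neg_neg, zero_add, Matrix.mulVec_mulVec]
    have hsum : (∑ i, (Sum.elim (0 : Fin n → ℝ) (-z)) i ^ 2) = normSq z := by
      rw [Fintype.sum_sum_type]; simp [normSq]
    have h := opNorm_bound (Xᵀ * fromCols (1 : Matrix (Fin n) (Fin n) ℝ) (-X))
      (Sum.elim (0 : Fin n → ℝ) (-z))
    rw [hA, hsum, ← hL] at h
    exact h
  have hKb : ∀ a b : Fin p → ℝ, dotp (KK.mulVec a) b
      ≤ L * Real.sqrt (normSq a) * Real.sqrt (normSq b) := by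
    intro a b
    refine (dotp_le _ _).trans ?_
    have h1 := hKz a
    have hb := Real.sqrt_nonneg (normSq b)
    nlinarith [Real.sqrt_nonneg (normSq (KK.mulVec a))]
  -- symmetry of KK
  have hKsym : ∀ a b : Fin p → ℝ, dotp (KK.mulVec a) b = dotp (KK.mulVec b) a := by
    intro a b
    have hKt : KKᵀ = KK := by rw [hKK, Matrix.transpose_mul, Matrix.transpose_transpose]
    calc dotp (KK.mulVec a) b = (KK *ᵥ a) ⬝ᵥ b := rfl
      _ = b ⬝ᵥ (KK *ᵥ a) := dotProduct_comm _ _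
      _ = (b ᵥ* KK) ⬝ᵥ a := Matrix.dotProduct_mulVec _ _ _
      _ = (KKᵀ *ᵥ b) ⬝ᵥ a := by rw [Matrix.mulVec_transpose]
      _ = (KK *ᵥ b) ⬝ᵥ a := by rw [hKt]
      _ = dotp (KK.mulVec b) a := rfl
  -- F is finite along the iterates
  set f0 := (F w0f).toReal with hf0'
  have hf0 : F w0f = (f0 : EReal) := (EReal.coe_toReal hw0f (hFbot w0f)).symm
  have hFnt : ∀ j : ℕ, F (w (j+1)) ≠ ⊤ := by
    intro j htop
    have h := hw j w0f
    rw [htop, hf0, EReal.coe_mul_top_of_pos hτ, EReal.coe_add_top, ← EReal.coe_mul,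
      ← EReal.coe_add] at h
    exact (EReal.coe_lt_top _).not_ge h
  set a : ℕ → ℝ := fun i => (F (w i)).toReal with ha'
  have haF : ∀ i, 1 ≤ i → F (w i) = ((a i : ℝ) : EReal) := by
    intro i hi
    obtain ⟨j, rfl⟩ := Nat.exists_eq_add_of_le hi
    exact (EReal.coe_toReal (by simpa [Nat.add_comm] using hFnt j) (hFbot _)).symm
  -- rewriting X-expressions
  have hlin : ∀ u : Fin p → ℝ, Xᵀ.mulVec (y - X.mulVec u) = bb - KK.mulVec u := by
    intro u
    rw [Matrix.mulVec_sub, Matrix.mulVec_mulVec]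
  have hphi : ∀ (u vb : Fin p → ℝ) (c : ℝ), F u = (c : EReal) →
      phi X y F G u vb = ((dotp (bb - KK.mulVec u) vb + c - G vb : ℝ) : EReal) := by
    intro u vb c hc
    unfold phi
    rw [hlin u, hc, ← EReal.coe_add, ← EReal.coe_sub]
  -- ================= PART (i) =================
  have part1 : ∀ k : ℕ, 1 ≤ k → ∀ ww vv : Fin p → ℝ,
      phi X y F G (avgIter w k) vv - phi X y F G ww (avgIter v k)
        ≤ (((1 / (k : ℝ)) *
            (normSq (vv - v 0) / (2 * σ) + normSq (ww - w 0) / (2 * τ)) : ℝ) : EReal) := by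
    intro k hk ww vv
    have hkr : (0:ℝ) < k := by exact_mod_cast hk
    by_cases hwwt : F ww = ⊤
    · have htop : phi X y F G ww (avgIter v k) = ⊤ := by
        unfold phi
        rw [hwwt, EReal.coe_add_top, sub_eq_add_neg, ← EReal.coe_neg, EReal.top_add_coe]
      rw [htop, sub_eq_add_neg, EReal.neg_top, EReal.add_bot]
      exact bot_le
    · set cw := (F ww).toReal with hcw'
      have hcw : F ww = (cw : EReal) := (EReal.coe_toReal hwwt (hFbot ww)).symm
      set D : ℕ → (Fin p → ℝ) := fun j => w j - w (j - 1) with hD'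
      set P : ℕ → ℝ := fun j => normSq (vv - v j)/(2*σ) + normSq (ww - w j)/(2*τ) with hP'
      set E : ℕ → ℝ := fun j =>
        dotp (KK.mulVec (D j)) (vv - v j) + normSq (D j)/(2*τ) with hE'
      set gp : ℕ → ℝ := fun i => (dotp (bb - KK.mulVec (w i)) vv + a i - G vv)
        - (dotp (bb - KK.mulVec ww) (v i) + cw - G (v i)) with hgp'
      have hDsucc : ∀ j : ℕ, D (j+1) = w (j+1) - w j := by
        intro j; simp [hD']
      have hD0 : D 0 = 0 := by simp [hD']
      have hw'D : ∀ j : ℕ, w' j = w j + D j := by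
        intro j
        cases j with
        | zero => rw [hw'0, hD0, add_zero]
        | succ i =>
          rw [hw' i, hDsucc i]
          funext x; simp; ring
      -- prox inequality for G (dual step)
      have hA : ∀ j : ℕ, ∀ u : Fin p → ℝ,
          G (v (j+1)) - G u - dotp (bb - KK.mulVec (w' j)) (v (j+1) - u)
            ≤ (normSq (u - v j) - normSq (u - v (j+1)) - normSq (v (j+1) - v j))/(2*σ) := by
        intro j u
        set dd : Fin p → ℝ := bb - KK.mulVec (w' j) with hdd'
        have h3 := prox_three_point (fun x => σ * G x)
          (by
            intro x y' a' b' ha2 hb2 hab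
            have hgc := G_conv hG x y' a' b' ha2 hb2
            have := mul_le_mul_of_nonneg_left hgc hσ.le
            linarith)
          (v j + σ • dd) (v (j+1)) (hv j) u
        have e1 : ∀ x : Fin p → ℝ, normSq (x - (v j + σ • dd))
            = normSq (x - v j) + 2*(-σ)*dotp (x - v j) dd + σ^2 * normSq dd := by
          intro x
          have : x - (v j + σ • dd) = (x - v j) + (-σ) • dd := by
            funext i; simp; ring
          rw [this, normSq_add_smul]; ring
        rw [e1 (v (j+1)), e1 u] at h3
        have e4 : σ * dotp (v (j+1) - u) dd
            = σ * dotp (v (j+1) - v j) dd - σ * dotp (u - v j) dd := by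
          have : dotp (v (j+1) - v j) dd - dotp (u - v j) dd = dotp (v (j+1) - u) dd := by
            rw [← dotp_sub_left]; congr 1; abel
          rw [← this]; ring
        have e5 : σ * dotp dd (v (j+1) - u) = σ * dotp (v (j+1) - u) dd := by
          rw [dotp_comm]
        rw [le_div_iff₀ (by positivity : (0:ℝ) < 2*σ)]
        linarith
      -- prox inequality for F (primal step)
      have hB : ∀ j : ℕ,
          a (j+1) - cw - dotp (KK.mulVec (v (j+1))) (w (j+1) - ww)
            ≤ (normSq (ww - w j) - normSq (ww - w (j+1)) - normSq (w (j+1) - w j))/(2*τ) := by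
        intro j
        set ee : Fin p → ℝ := KK.mulVec (v (j+1)) with hee'
        have h3 := prox_three_point_ereal F hFbot hFconv τ hτ
          (w j + τ • ee) (w (j+1)) (a (j+1)) (haF (j+1) (by omega)) (hw j) ww cw hcw
        have e1 : ∀ x : Fin p → ℝ, normSq (x - (w j + τ • ee))
            = normSq (x - w j) + 2*(-τ)*dotp (x - w j) ee + τ^2 * normSq ee := by
          intro x
          have : x - (w j + τ • ee) = (x - w j) + (-τ) • ee := by
            funext i; simp; ring
          rw [this, normSq_add_smul]; ring
        rw [e1 (w (j+1)), e1 ww] at h3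
        have e4 : τ * dotp (w (j+1) - ww) ee
            = τ * dotp (w (j+1) - w j) ee - τ * dotp (ww - w j) ee := by
          have : dotp (w (j+1) - w j) ee - dotp (ww - w j) ee = dotp (w (j+1) - ww) ee := by
            rw [← dotp_sub_left]; congr 1; abel
          rw [← this]; ring
        have e5 : τ * dotp ee (w (j+1) - ww) = τ * dotp (w (j+1) - ww) ee := by
          rw [dotp_comm]
        rw [le_div_iff₀ (by positivity : (0:ℝ) < 2*τ)]
        linarith
      -- bilinear identity
      have hbil : ∀ j : ℕ,
          dotp (bb - KK.mulVec (w (j+1))) vv - dotp (bb - KK.mulVec ww) (v (j+1))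
            + dotp (bb - KK.mulVec (w' j)) (v (j+1) - vv)
            + dotp (KK.mulVec (v (j+1))) (w (j+1) - ww)
          = dotp (KK.mulVec (w' j - w (j+1))) (vv - v (j+1)) := by
        intro j
        simp only [Matrix.mulVec_sub, dotp_sub_left, dotp_sub_right]
        linarith [hKsym (v (j+1)) (w (j+1)), hKsym (v (j+1)) ww]
      have hsplit : ∀ j : ℕ,
          dotp (KK.mulVec (w' j - w (j+1))) (vv - v (j+1))
          = dotp (KK.mulVec (D j)) (vv - v j) - dotp (KK.mulVec (D (j+1))) (vv - v (j+1))
            + dotp (KK.mulVec (D j)) (v j - v (j+1)) := by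
        intro j
        have hca : w' j - w (j+1) = D j - D (j+1) := by
          rw [hw'D j, hDsucc j]; funext x; simp; ring
        rw [hca]
        simp only [Matrix.mulVec_sub, dotp_sub_left, dotp_sub_right]
        ring
      have hcross : ∀ j : ℕ,
          dotp (KK.mulVec (D j)) (v j - v (j+1))
            ≤ normSq (D j)/(2*τ) + normSq (v (j+1) - v j)/(2*σ) := by
        intro j
        have h1 := hKb (D j) (v j - v (j+1))
        rw [normSq_sub_comm (v j) (v (j+1))] at h1
        have h2 := young_ineq hτ hσ hL0 hstep (Real.sqrt_nonneg (normSq (D j)))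
          (Real.sqrt_nonneg (normSq (v (j+1) - v j)))
        have h3 : Real.sqrt (normSq (D j)) ^ 2 = normSq (D j) :=
          Real.sq_sqrt (normSq_nonneg _)
        have h4 : Real.sqrt (normSq (v (j+1) - v j)) ^ 2 = normSq (v (j+1) - v j) :=
          Real.sq_sqrt (normSq_nonneg _)
        rw [h3, h4] at h2
        linarith
      -- per-step estimate
      have hstep1 : ∀ j : ℕ, gp (j+1) + (P (j+1) + E (j+1)) ≤ P j + E j := by
        intro j
        have hA' := hA j vv
        have hB' := hB j
        have hbil' := hbil j
        have hsplit' := hsplit j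
        have hcross' := hcross j
        rw [hDsucc] at hsplit'
        have eA : (normSq (vv - v j) - normSq (vv - v (j+1)) - normSq (v (j+1) - v j))/(2*σ)
            = normSq (vv - v j)/(2*σ) - normSq (vv - v (j+1))/(2*σ)
              - normSq (v (j+1) - v j)/(2*σ) := by ring
        have eB : (normSq (ww - w j) - normSq (ww - w (j+1)) - normSq (w (j+1) - w j))/(2*τ)
            = normSq (ww - w j)/(2*τ) - normSq (ww - w (j+1))/(2*τ)
              - normSq (w (j+1) - w j)/(2*τ) := by ring
        simp only [hgp', hP', hE', hDsucc]
        linarith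
      -- telescoping
      have htel : ∀ N : ℕ, ∑ j ∈ Finset.range N, gp (j+1) ≤ (P 0 + E 0) - (P N + E N) := by
        intro N
        have hsum : ∑ j ∈ Finset.range N, gp (j+1)
            ≤ ∑ j ∈ Finset.range N, ((fun i => P i + E i) j - (fun i => P i + E i) (j+1)) :=
          Finset.sum_le_sum (fun j _ => by have := hstep1 j; dsimp only; linarith)
        rw [Finset.sum_range_sub' (fun i => P i + E i) N] at hsum
        exact hsum
      have hE0 : E 0 = 0 := by
        simp [hE', hD0, Matrix.mulVec_zero, dotp, normSq]
      have hPE : ∀ N : ℕ, 0 ≤ P N + E N := by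
        intro N
        have h1 := hKb (D N) (-(vv - v N))
        rw [dotp_neg_right, normSq_neg] at h1
        have h2 := young_ineq hτ hσ hL0 hstep (Real.sqrt_nonneg (normSq (D N)))
          (Real.sqrt_nonneg (normSq (vv - v N)))
        have h3 : Real.sqrt (normSq (D N)) ^ 2 = normSq (D N) :=
          Real.sq_sqrt (normSq_nonneg _)
        have h4 : Real.sqrt (normSq (vv - v N)) ^ 2 = normSq (vv - v N) :=
          Real.sq_sqrt (normSq_nonneg _)
        have h5 : 0 ≤ normSq (ww - w N)/(2*τ) :=
          div_nonneg (normSq_nonneg _) (by positivity)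
        rw [h3, h4] at h2
        simp only [hP', hE']
        linarith
      have key : ∑ i ∈ Finset.Icc 1 k, gp i ≤ P 0 := by
        have h1 := htel k
        have h2 := hPE k
        rw [sum_Icc_one gp k]
        linarith [hE0]
      -- averaging identities
      have hcard : (Finset.Icc 1 k).card = k := by rw [Nat.card_Icc]; omega
      have hkne : (k : ℝ) ≠ 0 := hkr.ne'
      have i1 : dotp (bb - KK.mulVec (avgIter w k)) vv
          = (k:ℝ)⁻¹ * ∑ i ∈ Finset.Icc 1 k, dotp (bb - KK.mulVec (w i)) vv := by
        have hKavg : dotp (KK.mulVec (avgIter w k)) vv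
            = (k:ℝ)⁻¹ * ∑ i ∈ Finset.Icc 1 k, dotp (KK.mulVec (w i)) vv := by
          rw [hKsym]
          unfold avgIter
          rw [dotp_smul_right, dotp_sum_right]
          congr 1
          exact Finset.sum_congr rfl fun i _ => hKsym vv (w i)
        have e : ∀ i ∈ Finset.Icc 1 k, dotp (bb - KK.mulVec (w i)) vv
            = dotp bb vv - dotp (KK.mulVec (w i)) vv := fun i _ => dotp_sub_left _ _ _
        rw [dotp_sub_left, hKavg, Finset.sum_congr rfl e, Finset.sum_sub_distrib,
          Finset.sum_const, hcard, nsmul_eq_mul]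
        field_simp
      have i2 : dotp (bb - KK.mulVec ww) (avgIter v k)
          = (k:ℝ)⁻¹ * ∑ i ∈ Finset.Icc 1 k, dotp (bb - KK.mulVec ww) (v i) := by
        unfold avgIter
        rw [dotp_smul_right, dotp_sum_right]
      have hgpsum : ∑ i ∈ Finset.Icc 1 k, gp i
          = (∑ i ∈ Finset.Icc 1 k, dotp (bb - KK.mulVec (w i)) vv)
            + (∑ i ∈ Finset.Icc 1 k, a i) - (k : ℝ) * G vv
            - (∑ i ∈ Finset.Icc 1 k, dotp (bb - KK.mulVec ww) (v i)) - (k : ℝ) * cw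
            + (∑ i ∈ Finset.Icc 1 k, G (v i)) := by
        have hre : ∑ i ∈ Finset.Icc 1 k, gp i
            = ∑ i ∈ Finset.Icc 1 k,
                ((dotp (bb - KK.mulVec (w i)) vv + a i + G (v i))
                  - (dotp (bb - KK.mulVec ww) (v i) + (G vv + cw))) :=
          Finset.sum_congr rfl fun i _ => by simp only [hgp']; ring
        rw [hre, Finset.sum_sub_distrib, Finset.sum_add_distrib, Finset.sum_add_distrib,
          Finset.sum_add_distrib, Finset.sum_const, hcard, nsmul_eq_mul]
        ring
      -- convexity of F and G at the averaged iterates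
      have hSa := F_avg F hFbot hFconv w a haF k hk
      have hSg := G_avg hG v k hk
      -- the real-valued bound
      have hA12 : (dotp (bb - KK.mulVec (avgIter w k)) vv
            + ((k:ℝ)⁻¹ * ∑ i ∈ Finset.Icc 1 k, a i) - G vv)
          - (dotp (bb - KK.mulVec ww) (avgIter v k) + cw
            - ((k:ℝ)⁻¹ * ∑ i ∈ Finset.Icc 1 k, G (v i)))
          ≤ (1 / (k : ℝ)) * (normSq (vv - v 0) / (2 * σ) + normSq (ww - w 0) / (2 * τ)) := by
        have hid : (dotp (bb - KK.mulVec (avgIter w k)) vv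
              + ((k:ℝ)⁻¹ * ∑ i ∈ Finset.Icc 1 k, a i) - G vv)
            - (dotp (bb - KK.mulVec ww) (avgIter v k) + cw
              - ((k:ℝ)⁻¹ * ∑ i ∈ Finset.Icc 1 k, G (v i)))
            = (k:ℝ)⁻¹ * ∑ i ∈ Finset.Icc 1 k, gp i := by
          rw [i1, i2, hgpsum]
          field_simp
          ring
        rw [hid, one_div]
        have hmul := mul_le_mul_of_nonneg_left key (inv_nonneg.2 hkr.le)
        simp only [hP'] at hmul
        exact hmul
      -- EReal chain
      set A1 : ℝ := dotp (bb - KK.mulVec (avgIter w k)) vv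
          + ((k:ℝ)⁻¹ * ∑ i ∈ Finset.Icc 1 k, a i) - G vv with hA1'
      set A2 : ℝ := dotp (bb - KK.mulVec ww) (avgIter v k) + cw
          - ((k:ℝ)⁻¹ * ∑ i ∈ Finset.Icc 1 k, G (v i)) with hA2'
      have h1 : phi X y F G (avgIter w k) vv ≤ ((A1 : ℝ) : EReal) := by
        unfold phi
        rw [hA1', hlin (avgIter w k), EReal.coe_sub, EReal.coe_add, sub_eq_add_neg,
          sub_eq_add_neg, sub_eq_add_neg]
        exact add_le_add (add_le_add_right hSa _) le_rfl
      have h2 : ((A2 : ℝ) : EReal) ≤ phi X y F G ww (avgIter v k) := by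
        rw [hphi ww (avgIter v k) cw hcw, hA2', EReal.coe_le_coe_iff]
        linarith [hSg]
      calc phi X y F G (avgIter w k) vv - phi X y F G ww (avgIter v k)
          ≤ ((A1 : ℝ) : EReal) - ((A2 : ℝ) : EReal) := by
            rw [sub_eq_add_neg, sub_eq_add_neg]
            exact add_le_add h1 (EReal.neg_le_neg_iff.2 h2)
        _ = ((A1 - A2 : ℝ) : EReal) := (EReal.coe_sub _ _).symm
        _ ≤ (((1 / (k : ℝ)) *
            (normSq (vv - v 0) / (2 * σ) + normSq (ww - w 0) / (2 * τ)) : ℝ) : EReal) := by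
            rw [EReal.coe_le_coe_iff, hA1', hA2']
            exact hA12
  -- ================= PART (ii) =================
  have part2 : ∀ k : ℕ, 1 ≤ k →
      phi X y F G (avgIter w k) vstar - phi X y F G wstar (avgIter v k)
        ≤ ((((1 + 1 / (1 - τ * σ * L ^ 2)) / (k : ℝ)) *
            (normSq (wstar - w 0) / (2 * τ) + normSq (vstar - v 0) / (2 * σ)) : ℝ) : EReal) := by
    intro k hk
    have h := part1 k hk wstar vstar
    refine h.trans (EReal.coe_le_coe_iff.2 ?_)
    have hkr : (0:ℝ) < k := by exact_mod_cast hk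
    have hC : 0 ≤ 1 / (1 - τ * σ * L ^ 2) := by
      rcases lt_or_eq_of_le hstep with hlt | heq
      · have hpos : 0 < 1 - τ * σ * L ^ 2 := by linarith
        exact le_of_lt (div_pos one_pos hpos)
      · rw [heq]
        norm_num
    have hS1 : 0 ≤ normSq (vstar - v 0) / (2 * σ) :=
      div_nonneg (normSq_nonneg _) (by positivity)
    have hS2 : 0 ≤ normSq (wstar - w 0) / (2 * τ) :=
      div_nonneg (normSq_nonneg _) (by positivity)
    have h1 : 1 / (k:ℝ) ≤ (1 + 1/(1 - τ*σ*L^2))/(k:ℝ) :=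
      (div_le_div_iff_of_pos_right hkr).2 (by linarith)
    have hmul := mul_le_mul_of_nonneg_right h1 (add_nonneg hS1 hS2)
    calc (1/(k:ℝ)) * (normSq (vstar - v 0) / (2 * σ) + normSq (wstar - w 0) / (2 * τ))
        ≤ ((1 + 1/(1 - τ*σ*L^2))/(k:ℝ))
          * (normSq (vstar - v 0) / (2 * σ) + normSq (wstar - w 0) / (2 * τ)) := hmul
      _ = ((1 + 1/(1 - τ*σ*L^2))/(k:ℝ))
          * (normSq (wstar - w 0) / (2 * τ) + normSq (vstar - v 0) / (2 * σ)) := by ring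
  -- ================= PART (iii) =================
  have master : ∀ wh vh : Fin p → ℝ,
      MapClusterPt (wh, vh) Filter.atTop (fun k => (avgIter w k, avgIter v k)) →
      ∀ ww vv : Fin p → ℝ, phi X y F G wh vv ≤ phi X y F G ww vh := by
    intro wh vh hclus ww vv
    by_cases hwwt : F ww = ⊤
    · have htop : phi X y F G ww vh = ⊤ := by
        unfold phi
        rw [hwwt, EReal.coe_add_top, sub_eq_add_neg, ← EReal.coe_neg, EReal.top_add_coe]
      rw [htop]
      exact le_top
    · set cw := (F ww).toReal with hcw'
      have hcw : F ww = (cw : EReal) := (EReal.coe_toReal hwwt (hFbot ww)).symm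
      by_contra hlt0
      push_neg at hlt0
      set c : (Fin p → ℝ) → ℝ := fun u => dotp (bb - KK.mulVec u) vv with hc'
      set q : (Fin p → ℝ) → ℝ := fun vb => dotp (bb - KK.mulVec ww) vb + cw - G vb with hq'
      have hphiww : ∀ vb, phi X y F G ww vb = ((q vb : ℝ) : EReal) := by
        intro vb
        rw [hphi ww vb cw hcw]
      rw [hphiww vh] at hlt0
      obtain ⟨m, hm1, hm2⟩ := exists_between hlt0
      have hmtop : m ≠ ⊤ := by
        intro h; rw [h] at hm2; exact (not_top_lt hm2)
      have hmbot : m ≠ ⊥ := by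
        intro h; rw [h] at hm1; exact (not_lt_bot hm1)
      set t := m.toReal with ht'
      have hmt : m = (t : EReal) := (EReal.coe_toReal hmtop hmbot).symm
      have hqt : q vh < t := by
        rw [hmt] at hm1; exact EReal.coe_lt_coe_iff.1 hm1
      set ε := (t - q vh)/3 with hε'
      have hε : 0 < ε := by
        rw [hε']
        exact div_pos (sub_pos.2 hqt) (by norm_num)
      set s := t + G vv - c wh with hs'
      have hsF : ((s : ℝ) : EReal) < F wh := by
        by_cases hwh : F wh = ⊤
        · rw [hwh]; exact EReal.coe_lt_top _
        · set fh := (F wh).toReal with hfh'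
          have hFwh : F wh = (fh : EReal) := (EReal.coe_toReal hwh (hFbot wh)).symm
          have hphiwh : phi X y F G wh vv = ((c wh + fh - G vv : ℝ) : EReal) :=
            hphi wh vv fh hFwh
          rw [hphiwh, hmt] at hm2
          have := EReal.coe_lt_coe_iff.1 hm2
          rw [hFwh, EReal.coe_lt_coe_iff, hs']
          linarith
      have hFev : ∀ᶠ u in nhds wh, ((s : ℝ) : EReal) < F u := hFlsc wh _ hsF
      have hccont : Continuous c := by
        have hceq : c = fun u : Fin p → ℝ => ∑ i, (bb i - ∑ j, KK i j * u j) * vv i := by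
          funext u
          simp only [hc', dotp, Matrix.mulVec, dotProduct, Pi.sub_apply]
        rw [hceq]
        apply continuous_finset_sum
        intro i _
        exact ((continuous_const.sub
          (continuous_finset_sum _ fun j _ => continuous_const.mul (continuous_apply j))).mul
          continuous_const)
      have hqcont : Continuous q := by
        have hqeq : q = fun vb : Fin p → ℝ =>
            (∑ i, (bb - KK.mulVec ww) i * vb i) + cw - G vb := by
          funext vb
          simp only [hq', dotp]
        rw [hqeq]
        exact (((continuous_finset_sum _ fun i _ =>
          continuous_const.mul (continuous_apply i)).add continuous_const).sub
          (G_continuous hG))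
      have hcev : ∀ᶠ u in nhds wh, c wh - ε < c u :=
        (hccont.tendsto wh).eventually (eventually_gt_nhds (by linarith))
      have hqev : ∀ᶠ vb in nhds vh, q vb < q vh + ε :=
        (hqcont.tendsto vh).eventually (eventually_lt_nhds (by linarith))
      set U : Set (Fin p → ℝ) := {u | (((s : ℝ) : EReal) < F u ∧ c wh - ε < c u)} with hU'
      set V : Set (Fin p → ℝ) := {vb | q vb < q vh + ε} with hV'
      have hUmem : U ∈ nhds wh := hFev.and hcev
      have hVmem : V ∈ nhds vh := hqev
      have hUV : U ×ˢ V ∈ nhds (wh, vh) := by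
        rw [nhds_prod_eq]
        exact Filter.prod_mem_prod hUmem hVmem
      set C0 := normSq (vv - v 0) / (2 * σ) + normSq (ww - w 0) / (2 * τ) with hC0'
      have hC0 : 0 ≤ C0 :=
        add_nonneg (div_nonneg (normSq_nonneg _) (by positivity))
          (div_nonneg (normSq_nonneg _) (by positivity))
      obtain ⟨N, hN⟩ := exists_nat_gt (C0/ε)
      have hfreq := (mapClusterPt_iff_frequently.1 hclus) _ hUV
      have hev : ∀ᶠ k : ℕ in Filter.atTop, N + 1 ≤ k := Filter.eventually_ge_atTop (N+1)
      obtain ⟨k, hconj⟩ := (hfreq.and_eventually hev).exists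
      obtain ⟨hmemUV, hkN⟩ := hconj
      obtain ⟨hmemU, hmemV⟩ := hmemUV
      obtain ⟨hFk, hck⟩ := hmemU
      have hk1 : 1 ≤ k := by omega
      have hkrr : (0:ℝ) < k := by
        have : (1:ℝ) ≤ k := by exact_mod_cast hk1
        linarith
      have hgap := part1 k hk1 ww vv
      have hsmall : (1/(k:ℝ)) * C0 < ε := by
        have hNk : ((N:ℝ) + 1) ≤ k := by exact_mod_cast hkN
        have hCN : C0 < ((N:ℝ)) * ε := by
          rw [div_lt_iff₀ hε] at hN
          linarith
        have : C0 < (k:ℝ) * ε := by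
          have hNε : ((N:ℝ)) * ε ≤ (k:ℝ) * ε :=
            mul_le_mul_of_nonneg_right (by linarith) hε.le
          linarith
        rw [one_div, ← div_eq_inv_mul, div_lt_iff₀ hkrr]
        linarith [this]
      -- lower bound the gap at step k
      have hlow1 : ((t - ε : ℝ) : EReal) ≤ phi X y F G (avgIter w k) vv := by
        have hphi1 : phi X y F G (avgIter w k) vv
            = ((c (avgIter w k) : ℝ) : EReal) + F (avgIter w k) - ((G vv : ℝ) : EReal) := by
          unfold phi
          rw [hlin (avgIter w k)]
        rw [hphi1]
        have he1 : ((t - ε : ℝ) : EReal)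
            = ((c wh - ε : ℝ) : EReal) + ((s : ℝ) : EReal) - ((G vv : ℝ) : EReal) := by
          rw [← EReal.coe_add, ← EReal.coe_sub]
          congr 1
          rw [hs']; ring
        rw [he1, sub_eq_add_neg, sub_eq_add_neg]
        exact add_le_add (add_le_add (EReal.coe_le_coe_iff.2 hck.le) hFk.le) le_rfl
      have hup2 : phi X y F G ww (avgIter v k) ≤ ((q vh + ε : ℝ) : EReal) := by
        rw [hphiww (avgIter v k)]
        exact EReal.coe_le_coe_iff.2 hmemV.le
      have hfinal : ((ε : ℝ) : EReal)
          ≤ phi X y F G (avgIter w k) vv - phi X y F G ww (avgIter v k) := by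
        have he2 : ((ε : ℝ) : EReal) = ((t - ε : ℝ) : EReal) - ((q vh + ε : ℝ) : EReal) := by
          rw [← EReal.coe_sub]
          congr 1
          rw [hε']; ring
        rw [he2, sub_eq_add_neg, sub_eq_add_neg]
        exact add_le_add hlow1 (EReal.neg_le_neg_iff.2 hup2)
      have hcontr := hfinal.trans hgap
      rw [EReal.coe_le_coe_iff] at hcontr
      rw [hC0'] at hsmall
      linarith
  refine ⟨part1, part2, ?_⟩
  intro wh vh hclus
  intro w2 v2
  exact ⟨master wh vh hclus wh v2, master wh vh hclus w2 vh⟩
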